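/- Let $P_0,\dots,P_n$ be affinely independent in $\mathbb{R}^n$, fix $1\le l<n$, and for each $t\in\{0,\dots,l\}$ let $Q_t$ be a point in the convex hull of $\{P_j : j\in\{0,\dots,l\},\ j\neq t\}$. Define the $k$-cevian $C_t$ as the convex hull of $\{Q_t, P_t, P_{l+1},\dots,P_n\}$ (so $k=n-l$). If a point $X$ with all barycentric coordinates (with respect to $P_0,\dots,P_n$) strictly positive lies in $C_t$ for every $t\in\{0,\dots,l\}$, then there exists a point $\hat X$ lying in the segment $Q_t P_t$ (convex hull of $\{Q_t,P_t\}$) for every $t\in\{0,\dots,l\}$. -/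
import Mathlib

open Finset

lemma exists_weights {ι V : Type*} [Fintype ι] [AddCommGroup V] [Module ℝ V]
    (f : ι → V) (A : Set ι) (hA : A.Nonempty) {x : V}
    (hx : x ∈ convexHull ℝ (f '' A)) :
    ∃ w : ι → ℝ, (∀ i, 0 ≤ w i) ∧ (∀ i, i ∉ A → w i = 0) ∧ ∑ i, w i = 1 ∧
      ∑ i, w i • f i = x := by
  classical
  obtain ⟨j₀, hj₀⟩ := hA
  have himg : f '' A ⊆ Set.range (fun i => if i ∈ A then f i else f j₀) := by
    rintro _ ⟨i, hi, rfl⟩; exact ⟨i, by simp [hi]⟩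
  have hx' : x ∈ convexHull ℝ (Set.range (fun i => if i ∈ A then f i else f j₀)) :=
    convexHull_mono himg hx
  rw [convexHull_range_eq_exists_affineCombination] at hx'
  obtain ⟨s, w, hw0, hw1, hxval⟩ := hx'
  have hw'0 : ∀ i, 0 ≤ Set.indicator (↑s) w i := by
    intro i
    by_cases hi : i ∈ s
    · simpa [Set.indicator_apply, hi] using hw0 i hi
    · simp [Set.indicator_apply, hi]
  have hw'1 : ∑ i, Set.indicator (↑s) w i = 1 := by
    rw [Finset.sum_indicator_subset w (Finset.subset_univ s)]; exact hw1
  have hx2 : ∑ i, Set.indicator (↑s) w i • (if i ∈ A then f i else f j₀) = x := by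
    rw [← Finset.univ.affineCombination_eq_linear_combination _ _ hw'1,
      ← affineCombination_indicator_subset w _ (Finset.subset_univ s)]
    exact hxval
  set W : ι → ℝ := Set.indicator (↑s) w with hW
  set B : ℝ := ∑ i ∈ Finset.univ.filter (fun i => i ∉ A), W i with hB
  have hB0 : 0 ≤ B := Finset.sum_nonneg fun i _ => hw'0 i
  have hsplitW := Finset.sum_filter_add_sum_filter_not Finset.univ (fun i => i ∈ A) W
  refine ⟨fun i => if i ∈ A then (W i + if i = j₀ then B else 0) else 0,
    ?_, ?_, ?_, ?_⟩
  · intro i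
    by_cases hi : i ∈ A <;> simp only [hi, if_true, if_false, le_refl]
    exact add_nonneg (hw'0 i) (by split <;> simp [hB0])
  · intro i hi; simp [hi]
  · rw [← Finset.sum_filter_add_sum_filter_not Finset.univ (fun i => i ∈ A)
      (fun i => if i ∈ A then (W i + if i = j₀ then B else 0) else 0)]
    have h1 : ∑ i ∈ Finset.univ.filter (fun i => i ∈ A),
        (if i ∈ A then (W i + if i = j₀ then B else 0) else 0)
        = (∑ i ∈ Finset.univ.filter (fun i => i ∈ A), W i) + B := by
      rw [Finset.sum_congr rfl (fun i hi => by
        simp only [Finset.mem_filter] at hi; rw [if_pos hi.2]),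
        Finset.sum_add_distrib]
      congr 1
      rw [Finset.sum_ite_eq' (Finset.univ.filter (fun i => i ∈ A)) j₀ (fun _ => B)]
      simp [hj₀]
    have h2 : ∑ i ∈ Finset.univ.filter (fun i => i ∉ A),
        (if i ∈ A then (W i + if i = j₀ then B else 0) else 0) = 0 :=
      Finset.sum_eq_zero fun i hi => by
        simp only [Finset.mem_filter] at hi; rw [if_neg hi.2]
    rw [h1, h2, add_zero, hB, hsplitW, hw'1]
  · rw [← hx2, ← Finset.sum_filter_add_sum_filter_not Finset.univ (fun i => i ∈ A)
      (fun i => (if i ∈ A then (W i + if i = j₀ then B else 0) else 0) • f i),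
      ← Finset.sum_filter_add_sum_filter_not Finset.univ (fun i => i ∈ A)
      (fun i => W i • (if i ∈ A then f i else f j₀))]
    have h1 : ∑ i ∈ Finset.univ.filter (fun i => i ∈ A),
        (if i ∈ A then (W i + if i = j₀ then B else 0) else 0) • f i
        = (∑ i ∈ Finset.univ.filter (fun i => i ∈ A), W i • f i) + B • f j₀ := by
      rw [Finset.sum_congr rfl (fun i hi => by
        simp only [Finset.mem_filter] at hi; rw [if_pos hi.2, add_smul]),
        Finset.sum_add_distrib]
      congr 1
      rw [Finset.sum_congr rfl (fun i hi => by
        rw [ite_smul, zero_smul] : ∀ i ∈ _, (if i = j₀ then B else 0) • f i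
          = if i = j₀ then B • f i else 0),
        Finset.sum_ite_eq' (Finset.univ.filter (fun i => i ∈ A)) j₀ (fun i => B • f i)]
      simp [hj₀]
    have h2 : ∑ i ∈ Finset.univ.filter (fun i => i ∉ A),
        (if i ∈ A then (W i + if i = j₀ then B else 0) else 0) • f i = 0 :=
      Finset.sum_eq_zero fun i hi => by
        simp only [Finset.mem_filter] at hi; rw [if_neg hi.2, zero_smul]
    have h3 : ∑ i ∈ Finset.univ.filter (fun i => i ∈ A),
        W i • (if i ∈ A then f i else f j₀)
        = ∑ i ∈ Finset.univ.filter (fun i => i ∈ A), W i • f i :=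
      Finset.sum_congr rfl fun i hi => by
        simp only [Finset.mem_filter] at hi; rw [if_pos hi.2]
    have h4 : ∑ i ∈ Finset.univ.filter (fun i => i ∉ A),
        W i • (if i ∈ A then f i else f j₀) = B • f j₀ := by
      rw [Finset.sum_congr rfl (fun i hi => by
        simp only [Finset.mem_filter] at hi; rw [if_neg hi.2] :
        ∀ i ∈ Finset.univ.filter (fun i => i ∉ A),
          W i • (if i ∈ A then f i else f j₀) = W i • f j₀),
        ← Finset.sum_smul, hB]
    rw [h1, h2, h3, h4, add_zero]

theorem common_point_projects_to_induced_cevians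
    (n l : ℕ) (hl1 : 1 ≤ l) (hln : l < n)
    (P : Fin (n + 1) → EuclideanSpace ℝ (Fin n))
    (hP : AffineIndependent ℝ P)
    (Q : Fin (n + 1) → EuclideanSpace ℝ (Fin n))
    (hQ : ∀ t : Fin (n + 1), (t : ℕ) ≤ l →
      Q t ∈ convexHull ℝ (P '' {j | (j : ℕ) ≤ l ∧ j ≠ t}))
    (X : EuclideanSpace ℝ (Fin n))
    (α : Fin (n + 1) → ℝ)
    (hαpos : ∀ i, 0 < α i) (hαsum : ∑ i, α i = 1)
    (hX : X = ∑ i, α i • P i)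
    (hXC : ∀ t : Fin (n + 1), (t : ℕ) ≤ l →
      X ∈ convexHull ℝ ({Q t, P t} ∪ P '' {m | l < (m : ℕ)})) :
    ∃ Xhat, ∀ t : Fin (n + 1), (t : ℕ) ≤ l → Xhat ∈ segment ℝ (Q t) (P t) := by
  classical
  set Sl : Finset (Fin (n + 1)) := Finset.univ.filter (fun j => (j : ℕ) ≤ l) with hSl
  have hSpos : 0 < ∑ j ∈ Sl, α j := by
    refine Finset.sum_pos (fun i _ => hαpos i) ⟨⟨0, by omega⟩, ?_⟩
    simp [hSl]
  set S : ℝ := ∑ j ∈ Sl, α j with hSdef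
  refine ⟨S⁻¹ • ∑ j ∈ Sl, α j • P j, fun t ht => ?_⟩
  set A : Set (Fin (n + 1)) := {j | (j : ℕ) ≤ l ∧ j ≠ t} with hA
  have hAne : A.Nonempty := by
    by_cases h : (t : ℕ) = 0
    · refine ⟨⟨1, by omega⟩, ⟨by simpa using hl1, fun he => ?_⟩⟩
      rw [← he] at h; simp at h
    · exact ⟨⟨0, by omega⟩, ⟨Nat.zero_le l, fun he => h (by rw [← he])⟩⟩
  obtain ⟨q, hq0, hqA, hq1, hqP⟩ := exists_weights P A hAne (hQ t ht)
  set g : Fin (n + 1) → EuclideanSpace ℝ (Fin n) :=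
    fun j => if (j : ℕ) ≤ l ∧ j ≠ t then Q t else P j with hg
  have hsub : ({Q t, P t} ∪ P '' {m | l < (m : ℕ)}) ⊆ g '' Set.univ := by
    rintro y (hy | ⟨m, hm, rfl⟩)
    rcases hy with rfl | rfl
    · obtain ⟨j₀, hj₀⟩ := hAne
      exact ⟨j₀, trivial, by simp [hg, hj₀.1, hj₀.2]⟩
    · exact ⟨t, trivial, by simp [hg]⟩
    · refine ⟨m, trivial, ?_⟩
      have hm' : l < (m : ℕ) := hm
      have : ¬ (m : ℕ) ≤ l := by omega
      simp [hg, this]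
  have hXmem : X ∈ convexHull ℝ (g '' Set.univ) :=
    convexHull_mono hsub (hXC t ht)
  obtain ⟨w, hw0, -, hw1, hwX⟩ := exists_weights g Set.univ ⟨t, trivial⟩ hXmem
  set Ft : Finset (Fin (n + 1)) :=
    Finset.univ.filter (fun j : Fin (n+1) => (j : ℕ) ≤ l ∧ j ≠ t) with hFt
  set a : ℝ := ∑ j ∈ Ft, w j with ha
  have ha0 : 0 ≤ a := Finset.sum_nonneg fun i _ => hw0 i
  have hmemFt : ∀ j, j ∈ Ft ↔ ((j : ℕ) ≤ l ∧ j ≠ t) := by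
    intro j; simp [hFt]
  -- v = barycentric coordinates obtained from the cevian representation
  set v : Fin (n + 1) → ℝ :=
    fun j => a * q j + (if (j : ℕ) ≤ l ∧ j ≠ t then 0 else w j) with hv
  have hsplitw := Finset.sum_filter_add_sum_filter_not Finset.univ
    (fun j : Fin (n+1) => (j : ℕ) ≤ l ∧ j ≠ t) w
  have hite : ∑ j : Fin (n+1), (if (j : ℕ) ≤ l ∧ j ≠ t then (0:ℝ) else w j)
      = ∑ j ∈ Finset.univ.filter (fun j : Fin (n+1) => ¬((j : ℕ) ≤ l ∧ j ≠ t)), w j := by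
    rw [Finset.sum_ite]
    simp
  have hv1 : ∑ j, v j = 1 := by
    rw [hv]
    rw [Finset.sum_add_distrib, ← Finset.mul_sum, hq1, mul_one, hite]
    rw [← hw1, ← hsplitw, ha, hFt]
  have hitesmul : ∑ j : Fin (n+1), (if (j : ℕ) ≤ l ∧ j ≠ t then (0:ℝ) else w j) • P j
      = ∑ j ∈ Finset.univ.filter (fun j : Fin (n+1) => ¬((j : ℕ) ≤ l ∧ j ≠ t)), w j • P j := by
    rw [← Finset.sum_filter_add_sum_filter_not Finset.univ
      (fun j : Fin (n+1) => (j : ℕ) ≤ l ∧ j ≠ t)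
      (fun j => (if (j : ℕ) ≤ l ∧ j ≠ t then (0:ℝ) else w j) • P j)]
    rw [Finset.sum_eq_zero (fun j hj => by
      simp only [Finset.mem_filter] at hj; rw [if_pos hj.2, zero_smul]), zero_add]
    exact Finset.sum_congr rfl fun j hj => by
      simp only [Finset.mem_filter] at hj; rw [if_neg hj.2]
  have hXg : X = a • Q t + ∑ j ∈ Finset.univ.filter
      (fun j : Fin (n+1) => ¬((j : ℕ) ≤ l ∧ j ≠ t)), w j • P j := by
    rw [← hwX, ← Finset.sum_filter_add_sum_filter_not Finset.univ
      (fun j : Fin (n+1) => (j : ℕ) ≤ l ∧ j ≠ t) (fun j => w j • g j)]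
    congr 1
    · rw [Finset.sum_congr rfl (fun j hj => by
        simp only [Finset.mem_filter] at hj
        rw [hg]; simp only [if_pos hj.2] :
        ∀ j ∈ Finset.univ.filter (fun j : Fin (n+1) => (j : ℕ) ≤ l ∧ j ≠ t),
          w j • g j = w j • Q t), ← Finset.sum_smul, ha, hFt]
    · exact Finset.sum_congr rfl fun j hj => by
        simp only [Finset.mem_filter] at hj
        rw [hg]; simp only [if_neg hj.2]
  have hvP : ∑ j, v j • P j = X := by
    rw [hv]
    simp only [add_smul]
    rw [Finset.sum_add_distrib, hitesmul]
    have : ∑ j, (a * q j) • P j = a • Q t := by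
      rw [← hqP, Finset.smul_sum]
      exact Finset.sum_congr rfl fun j _ => (mul_smul a (q j) (P j))
    rw [this, hXg]
  have huniq : v = α := by
    refine (affineIndependent_iff_eq_of_fintype_affineCombination_eq ℝ P).mp hP v α hv1
      hαsum ?_
    rw [Finset.univ.affineCombination_eq_linear_combination P v hv1,
      Finset.univ.affineCombination_eq_linear_combination P α hαsum,
      hvP, hX]
  have hαq : ∀ j ∈ Ft, α j = a * q j := by
    intro j hj
    have hj' := (hmemFt j).mp hj
    have := congrFun huniq j
    rw [hv] at this
    simp only [if_pos hj', add_zero] at this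
    exact this.symm
  have hqzero : ∀ j, j ∉ Ft → q j = 0 := by
    intro j hj
    exact hqA j (by rw [hA]; exact fun hc => hj ((hmemFt j).mpr hc))
  have haQ : ∑ j ∈ Ft, α j • P j = a • Q t := by
    rw [Finset.sum_congr rfl (fun j hj => by rw [hαq j hj] :
        ∀ j ∈ Ft, α j • P j = (a * q j) • P j)]
    rw [← hqP, Finset.smul_sum]
    rw [Finset.sum_subset (Finset.subset_univ Ft)
      (fun j _ hj => by rw [hqzero j hj, mul_zero, zero_smul])]
    exact Finset.sum_congr rfl fun j _ => (mul_smul a (q j) (P j))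
  have haa : ∑ j ∈ Ft, α j = a := by
    rw [Finset.sum_congr rfl hαq, ← Finset.mul_sum]
    rw [Finset.sum_subset (Finset.subset_univ Ft)
      (fun j _ hj => hqzero j hj), hq1, mul_one]
  have htSl : t ∈ Sl := by simp [hSl, ht]
  have hFtSl : Sl.erase t = Ft := by
    ext j
    simp only [Finset.mem_erase, hmemFt, hSl, Finset.mem_filter, Finset.mem_univ,
      true_and]
    tauto
  have hsum : ∑ j ∈ Sl, α j • P j = α t • P t + a • Q t := by
    rw [← Finset.add_sum_erase Sl (fun j => α j • P j) htSl, hFtSl, haQ]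
  have hSa : S = α t + a := by
    rw [hSdef, ← Finset.add_sum_erase Sl α htSl, hFtSl, haa]
  refine ⟨S⁻¹ * a, S⁻¹ * α t, mul_nonneg (inv_nonneg.mpr hSpos.le) ha0, mul_nonneg (inv_nonneg.mpr hSpos.le) (hαpos t).le, ?_, ?_⟩
  · rw [← mul_add, add_comm a (α t), ← hSa, inv_mul_cancel₀ hSpos.ne']
  · rw [hsum, mul_smul, mul_smul, ← smul_add, add_comm (a • Q t) (α t • P t)]
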